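/- For z = a + ib ∈ ℂ with |z| < 1, define f(z) = −ab/√(1 − b²) + i·√(1 − b²) and c(z) = √(2 − |z|² − |f(z)|²). If z, u ∈ ℂ and v ∈ ℝ satisfy |z| < 1, |u| < 1, Im(u) > 0, v > 0, |z|² + |u|² + v² = 2, and z² + u² + v² = 0, then u = f(z) and v = c(z). -/

import Mathlib

/-- The auxiliary function `f` of Proposition 6.4: for `z = a + ib` in the open unit
disk, `f(z) = −ab/√(1 − b²) + i·√(1 − b²)`. -/
noncomputable def auxf (z : ℂ) : ℂ :=
  ((-(z.re * z.im) / Real.sqrt (1 - z.im ^ 2) : ℝ) : ℂ) +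
    ((Real.sqrt (1 - z.im ^ 2) : ℝ) : ℂ) * Complex.I

/-- The auxiliary function `c` of Proposition 6.4:
`c(z) = √(2 − |z|² − |f(z)|²)`. -/
noncomputable def auxc (z : ℂ) : ℝ :=
  Real.sqrt (2 - ‖z‖ ^ 2 - ‖auxf z‖ ^ 2)

/-- The uniqueness statement preceding Proposition 6.4: if `|z| < 1`, `|u| < 1`,
`Im u > 0`, `v > 0`, `|z|² + |u|² + v² = 2` and `z² + u² + v² = 0`, then `u = f(z)` and
`v = c(z)`. -/
theorem auxf_auxc_unique (z u : ℂ) (v : ℝ)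
    (hz : ‖z‖ < 1) (hu : ‖u‖ < 1) (huim : 0 < u.im) (hv : 0 < v)
    (hnorm : ‖z‖ ^ 2 + ‖u‖ ^ 2 + v ^ 2 = 2)
    (hquad : z ^ 2 + u ^ 2 + ((v : ℝ) : ℂ) ^ 2 = 0) :
    u = auxf z ∧ v = auxc z := by
  have hre := congrArg Complex.re hquad
  have him := congrArg Complex.im hquad
  simp [pow_two, Complex.mul_re, Complex.mul_im] at hre him
  rw [Complex.sq_norm, Complex.sq_norm, Complex.normSq_apply, Complex.normSq_apply] at hnorm
  have hq2 : u.im ^ 2 = 1 - z.im ^ 2 := by nlinarith [hre, hnorm]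
  have hq : u.im = Real.sqrt (1 - z.im ^ 2) := by
    rw [← hq2]; exact (Real.sqrt_sq huim.le).symm
  have hqpos : (0:ℝ) < Real.sqrt (1 - z.im ^ 2) := hq ▸ huim
  have hp : u.re = -(z.re * z.im) / Real.sqrt (1 - z.im ^ 2) := by
    rw [← hq]
    field_simp
    nlinarith [him]
  have hu_eq : u = auxf z := by
    apply Complex.ext <;> simp [auxf, hp, hq]
  refine ⟨hu_eq, ?_⟩
  have hv2 : v ^ 2 = 2 - ‖z‖ ^ 2 - ‖auxf z‖ ^ 2 := by
    rw [← hu_eq, Complex.sq_norm, Complex.sq_norm, Complex.normSq_apply, Complex.normSq_apply]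
    linarith
  rw [auxc, ← hv2, Real.sqrt_sq hv.le]
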